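/- For each i = 1,…,n let S_i ⊆ [r_i], and suppose one of the following holds: (1) |S_1| = ⋯ = |S_t| = 1; (2) there exists i such that |S_j| = 1 for all j ≠ i; (3) |S_i| ≤ 2 for all i. Then S = S_1 × ⋯ × S_n is a t-signed set consisting of a single connectedness equivalence class. -/
import Mathlib


open MvPolynomial Finset

/-- The index set `N = [r 1] × ⋯ × [r n]`, realized as dependent functions. -/
abbrev Idx {n : ℕ} (r : Fin n → ℕ) := ∀ i, Fin (r i)

variable {n : ℕ} {r : Fin n → ℕ}

/-- The switch `s(K,a,b)`: `b i` in the components of `K`, `a i` elsewhere. -/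
def sw (K : Finset (Fin n)) (a b : Idx r) : Idx r := fun i => if i ∈ K then b i else a i

/-- The distance `d(a,b) = #{i : a i ≠ b i}`. -/
def hdist (a b : Idx r) : ℕ := (univ.filter fun i => a i ≠ b i).card

/-- The truncated distance `d_t(a,b) = #{i ∈ [t] : a i ≠ b i}`. -/
def hdistT (t : ℕ) (a b : Idx r) : ℕ :=
  (univ.filter fun i : Fin n => (i : ℕ) < t ∧ a i ≠ b i).card

/-- `c : ℕ → N` is a path of length `m` from `a` to `b` inside `S`:
consecutive elements differ in exactly one component. -/
def IsPath (S : Set (Idx r)) (a b : Idx r) (m : ℕ) (c : ℕ → Idx r) : Prop :=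
  c 0 = a ∧ c m = b ∧ (∀ j ≤ m, c j ∈ S) ∧ ∀ j < m, hdist (c j) (c (j + 1)) = 1

/-- `a` and `b` are connected in `S`. -/
def Connected (S : Set (Idx r)) (a b : Idx r) : Prop := ∃ m c, IsPath S a b m c

/-- The minimal path length `pl_S(a,b)`. -/
noncomputable def pl (S : Set (Idx r)) (a b : Idx r) : ℕ :=
  sInf {m | ∃ c, IsPath S a b m c}

/-- `S` is `t`-switchable. -/
def Switchable (t : ℕ) (S : Set (Idx r)) : Prop :=
  ∀ a ∈ S, ∀ b ∈ S, hdist a b = 2 → ∀ i : Fin n, (i : ℕ) < t →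
    sw {i} a b ∈ S ∧ sw {i} b a ∈ S

/-- `S` is `t`-signed: `t`-switchable, and each connectedness class satisfies one of:
constant first `t` coordinates, pairwise distance at most 1, or path-independent
parity of path lengths. -/
def Signed (t : ℕ) (S : Set (Idx r)) : Prop :=
  Switchable t S ∧
  ∀ a ∈ S,
    (∀ b c, Connected S a b → Connected S a c → ∀ i : Fin n, (i : ℕ) < t → b i = c i) ∨
    (∀ b c, Connected S a b → Connected S a c → hdist b c ≤ 1) ∨
    (∀ b c, Connected S a b → Connected S a c →
      ∀ m m' p p', IsPath S b c m p → IsPath S b c m' p' → m % 2 = m' % 2)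

variable (k : Type*) [Field k]

/-- The generalized determinant `f_{i,a,b}`. -/
noncomputable def fdet (i : Fin n) (a b : Idx r) : MvPolynomial (Idx r) k :=
  X a * X b - X (sw {i} a b) * X (sw {i} b a)

/-- The generalized permanent `g_{i,a,b}`. -/
noncomputable def gperm (i : Fin n) (a b : Idx r) : MvPolynomial (Idx r) k :=
  X a * X b + X (sw {i} a b) * X (sw {i} b a)

/-- The binomial `h_{S,K,a,b}`. -/
noncomputable def hbin (S : Set (Idx r)) (K : Finset (Fin n)) (a b : Idx r) :
    MvPolynomial (Idx r) k :=
  X a * X b - (-1) ^ (K.card * (pl S a b - 1)) * (X (sw K a b) * X (sw K b a))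

/-- The slice permanental ideal `J^⟨t⟩`. -/
noncomputable def Jt (t : ℕ) : Ideal (MvPolynomial (Idx r) k) :=
  Ideal.span {p | ∃ (a b : Idx r) (i : Fin n),
    hdist a b = 2 ∧ (i : ℕ) < t ∧ a i ≠ b i ∧ p = gperm k i a b}

/-- The ideal `J̃^⟨t⟩_S`. -/
noncomputable def Jtilde (t : ℕ) (S : Set (Idx r)) : Ideal (MvPolynomial (Idx r) k) :=
  Ideal.span {p | ∃ (a b : Idx r) (i : Fin n),
    Connected S a b ∧ (i : ℕ) < t ∧ a i ≠ b i ∧ p = hbin k S {i} a b}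

/-- The ideal `Var^⟨t⟩_S = (x_a : a ∉ S)`. -/
noncomputable def VarIdeal (S : Set (Idx r)) : Ideal (MvPolynomial (Idx r) k) :=
  Ideal.span {p | ∃ a ∉ S, p = X a}

/-- The ideal `Q^⟨t⟩_S = Var^⟨t⟩_S + J̃^⟨t⟩_S`. -/
noncomputable def Qideal (t : ℕ) (S : Set (Idx r)) : Ideal (MvPolynomial (Idx r) k) :=
  VarIdeal k S + Jtilde k t S

/-- The ideal `Ĵ^⟨t⟩`. -/
noncomputable def Jhat (t : ℕ) : Ideal (MvPolynomial (Idx r) k) :=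
  Ideal.span {p | ∃ (a b : Idx r) (i : Fin n),
    hdist a b = 3 ∧ hdistT t a b = 3 ∧ (i : ℕ) < t ∧ a i ≠ b i ∧ p = gperm k i a b}

/-- `S` is a maximal `t`-signed set. -/
noncomputable def MaximalSigned (t : ℕ) (S : Set (Idx r)) : Prop :=
  Signed t S ∧ ∀ T : Set (Idx r), Signed t T → S ⊆ T → Qideal k t S ≤ Qideal k t T

section Aux

lemma connected_mem_right {S : Set (Idx r)} {a b : Idx r} (h : Connected S a b) : b ∈ S := by
  obtain ⟨m, c, _, hcm, hmem, _⟩ := h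
  rw [← hcm]; exact hmem m le_rfl

lemma hdist_eq_zero {a b : Idx r} (h : hdist a b = 0) : a = b := by
  funext i
  by_contra hne
  have hi : i ∈ univ.filter fun i => a i ≠ b i := by simpa using hne
  rw [hdist, Finset.card_eq_zero] at h
  simp [h] at hi

lemma connected_refl {S : Set (Idx r)} {a : Idx r} (ha : a ∈ S) : Connected S a a :=
  ⟨0, fun _ => a, rfl, rfl, fun _ _ => ha, fun j h => absurd h (Nat.not_lt_zero j)⟩

lemma connected_cons {S : Set (Idx r)} {a a' b : Idx r} (ha : a ∈ S)
    (h1 : hdist a a' = 1) (h : Connected S a' b) : Connected S a b := by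
  obtain ⟨m, c, hc0, hcm, hmem, hstep⟩ := h
  refine ⟨m + 1, fun j => if j = 0 then a else c (j - 1), by simp, by simp [hcm], ?_, ?_⟩
  · intro j hj
    rcases Nat.eq_zero_or_pos j with rfl | hj0
    · simpa using ha
    · simp only [Nat.pos_iff_ne_zero.mp hj0, if_neg]
      have : ¬ j = 0 := Nat.pos_iff_ne_zero.mp hj0
      simp only [this, if_false]
      exact hmem (j - 1) (by omega)
  · intro j hj
    rcases Nat.eq_zero_or_pos j with rfl | hj0
    · simpa [hc0] using h1
    · have h1' : ¬ j = 0 := Nat.pos_iff_ne_zero.mp hj0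
      have h2' : ¬ j + 1 = 0 := by omega
      simp only [h1', h2', if_false]
      have : j + 1 - 1 = (j - 1) + 1 := by omega
      rw [this]
      exact hstep (j - 1) (by omega)

lemma box_connected_aux {T : ∀ i : Fin n, Set (Fin (r i))} :
    ∀ d (a b : Idx r), hdist a b = d → (∀ i, a i ∈ T i) → (∀ i, b i ∈ T i) →
      Connected {a : Idx r | ∀ i, a i ∈ T i} a b := by
  intro d
  induction d with
  | zero =>
    intro a b h ha _
    rw [hdist_eq_zero h] at ha ⊢
    exact connected_refl ha
  | succ d ih =>
    intro a b h ha hb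
    have hne : ∃ i, a i ≠ b i := by
      by_contra hc
      push_neg at hc
      have : a = b := funext hc
      subst this
      simp [hdist] at h
    obtain ⟨i, hi⟩ := hne
    set a' : Idx r := Function.update a i (b i) with ha'def
    have ha' : ∀ j, a' j ∈ T j := by
      intro j
      rcases eq_or_ne j i with rfl | hji
      · simpa [ha'def] using hb j
      · simpa [ha'def, Function.update_of_ne hji] using ha j
    have h1 : hdist a a' = 1 := by
      have : (univ.filter fun j => a j ≠ a' j) = {i} := by
        ext j
        rcases eq_or_ne j i with rfl | hji
        · simp [ha'def, hi]
        · simp [ha'def, Function.update_of_ne hji, hji]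
      simp [hdist, this]
    have h2 : hdist a' b = d := by
      have heq : (univ.filter fun j => a' j ≠ b j)
          = (univ.filter fun j => a j ≠ b j).erase i := by
        ext j
        rcases eq_or_ne j i with rfl | hji
        · simp [ha'def]
        · simp [ha'def, Function.update_of_ne hji, hji]
      have hmem : i ∈ univ.filter fun j => a j ≠ b j := by simpa using hi
      rw [hdist, heq, Finset.card_erase_of_mem hmem]
      rw [hdist] at h
      omega
    exact connected_cons ha h1 (ih a' b h2 ha' hb)

open Classical in
/-- Parity function for case 3. -/
noncomputable def eps (T : ∀ i : Fin n, Set (Fin (r i))) (a : Idx r) : ZMod 2 :=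
  ∑ i : Fin n, if h : (T i).Nonempty then (if a i = h.some then 0 else 1) else 0

lemma eps_step {T : ∀ i : Fin n, Set (Fin (r i))} (h2 : ∀ i, (T i).ncard ≤ 2)
    {x y : Idx r} (hx : ∀ i, x i ∈ T i) (hy : ∀ i, y i ∈ T i)
    (hd : hdist x y = 1) : eps T y = eps T x + 1 := by
  rw [hdist, Finset.card_eq_one] at hd
  obtain ⟨i0, hi0⟩ := hd
  have hxi0 : x i0 ≠ y i0 := by
    have : i0 ∈ univ.filter fun j => x j ≠ y j := by simp [hi0]
    simpa using this
  have hagree : ∀ j, j ≠ i0 → x j = y j := by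
    intro j hj
    by_contra hc
    have : j ∈ univ.filter fun j => x j ≠ y j := by simpa using hc
    rw [hi0] at this
    simp at this
    exact hj this
  -- T i0 = {x i0, y i0}
  have hfin : (T i0).Finite := Set.toFinite _
  have hsub : ({x i0, y i0} : Set (Fin (r i0))) ⊆ T i0 := by
    intro z hz
    rcases hz with rfl | hz
    · exact hx i0
    · rw [Set.mem_singleton_iff] at hz; subst hz; exact hy i0
  have hpair : ({x i0, y i0} : Set (Fin (r i0))).ncard = 2 := Set.ncard_pair hxi0
  have hTeq : ({x i0, y i0} : Set (Fin (r i0))) = T i0 :=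
    Set.eq_of_subset_of_ncard_le hsub (by rw [hpair]; exact h2 i0) hfin
  have hne : (T i0).Nonempty := ⟨x i0, hx i0⟩
  have hsome : hne.some = x i0 ∨ hne.some = y i0 := by
    have hm := (Set.ext_iff.mp hTeq hne.some).mpr hne.some_mem
    simpa using hm
  have key : eps T y - eps T x = 1 := by
    unfold eps
    rw [← Finset.sum_sub_distrib]
    rw [Finset.sum_eq_single i0]
    · rw [dif_pos hne, dif_pos hne]
      rcases hsome with hs | hs
      · rw [hs, if_pos rfl, if_neg (fun h => hxi0 h.symm)]
        decide
      · rw [hs, if_pos rfl, if_neg hxi0]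
        decide
    · intro b _ hb
      rw [hagree b hb, sub_self]
    · intro h
      exact absurd (Finset.mem_univ i0) h
  have := eq_add_of_sub_eq key
  rw [add_comm] at this
  exact this

lemma eps_path {T : ∀ i : Fin n, Set (Fin (r i))} (h2 : ∀ i, (T i).ncard ≤ 2) :
    ∀ (m : ℕ) (b c : Idx r) (p : ℕ → Idx r),
      IsPath {a : Idx r | ∀ i, a i ∈ T i} b c m p → eps T c = eps T b + m := by
  intro m
  induction m with
  | zero =>
    intro b c p ⟨hp0, hpm, _, _⟩
    rw [← hpm, hp0]
    simp
  | succ m ih =>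
    intro b c p ⟨hp0, hpm, hmem, hstep⟩
    have h1 : eps T (p 1) = eps T b + 1 := by
      rw [← hp0]
      exact eps_step h2 (hmem 0 (by omega)) (hmem 1 (by omega)) (hstep 0 (by omega))
    have h2' : eps T c = eps T (p 1) + m := by
      refine ih (p 1) c (fun j => p (j + 1)) ⟨rfl, hpm, ?_, ?_⟩
      · intro j hj; exact hmem (j + 1) (by omega)
      · intro j hj
        have := hstep (j + 1) (by omega)
        simpa using this
    rw [h2', h1]
    push_cast
    ring

end Aux

/-- boxes of the indicated shapes are `t`-signed and connected. -/
theorem stmt12 (t : ℕ) (ht : t ≤ n) (T : ∀ i : Fin n, Set (Fin (r i)))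
    (hcond : (∀ i : Fin n, (i : ℕ) < t → (T i).ncard = 1) ∨
      (∃ i : Fin n, ∀ j : Fin n, j ≠ i → (T j).ncard = 1) ∨
      (∀ i : Fin n, (T i).ncard ≤ 2)) :
    Signed t {a : Idx r | ∀ i, a i ∈ T i} ∧
    ∀ a ∈ {a : Idx r | ∀ i, a i ∈ T i}, ∀ b ∈ {a : Idx r | ∀ i, a i ∈ T i},
      Connected {a : Idx r | ∀ i, a i ∈ T i} a b := by
  set S : Set (Idx r) := {a : Idx r | ∀ i, a i ∈ T i} with hS
  have hSmem : ∀ a : Idx r, a ∈ S ↔ ∀ i, a i ∈ T i := fun a => Iff.rfl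
  have hswmem : ∀ a ∈ S, ∀ b ∈ S, ∀ K : Finset (Fin n), sw K a b ∈ S := by
    intro a ha b hb K
    rw [hSmem]
    intro i
    unfold sw
    split
    · exact (hSmem b).mp hb i
    · exact (hSmem a).mp ha i
  have hconn : ∀ a ∈ S, ∀ b ∈ S, Connected S a b := fun a ha b hb =>
    box_connected_aux (hdist a b) a b rfl ((hSmem a).mp ha) ((hSmem b).mp hb)
  refine ⟨⟨?_, ?_⟩, hconn⟩
  · intro a ha b hb _ i _
    exact ⟨hswmem a ha b hb {i}, hswmem b hb a ha {i}⟩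
  · intro a ha
    rcases hcond with h1 | h2 | h3
    · left
      intro b c hb hc i hit
      have hb' := (hSmem b).mp (connected_mem_right hb)
      have hc' := (hSmem c).mp (connected_mem_right hc)
      obtain ⟨x, hx⟩ := Set.ncard_eq_one.mp (h1 i hit)
      have hbx := hb' i
      have hcx := hc' i
      rw [hx, Set.mem_singleton_iff] at hbx hcx
      rw [hbx, hcx]
    · right; left
      intro b c hb hc
      obtain ⟨i, hi⟩ := h2
      have hb' := (hSmem b).mp (connected_mem_right hb)
      have hc' := (hSmem c).mp (connected_mem_right hc)
      have hsub : (univ.filter fun j => b j ≠ c j) ⊆ {i} := by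
        intro j hj
        simp only [Finset.mem_filter, Finset.mem_univ, true_and] at hj
        simp only [Finset.mem_singleton]
        by_contra hji
        obtain ⟨x, hx⟩ := Set.ncard_eq_one.mp (hi j hji)
        have hbx := hb' j
        have hcx := hc' j
        rw [hx, Set.mem_singleton_iff] at hbx hcx
        exact hj (hbx.trans hcx.symm)
      calc hdist b c ≤ ({i} : Finset (Fin n)).card := Finset.card_le_card hsub
        _ = 1 := rfl
    · right; right
      intro b c _ _ m m' p p' hp hp'
      have e1 := eps_path h3 m b c p hp
      have e2 := eps_path h3 m' b c p' hp'
      have hcast : (m : ZMod 2) = m' := add_left_cancel (e1.symm.trans e2)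
      exact (ZMod.natCast_eq_natCast_iff m m' 2).mp hcast
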